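/- arXiv:1809.03433 — 6 statements merged into one kernel-verified Lean document; each statement's English description precedes it below -/
import Mathlib

section
/- Under the change of variables x = -v/(v²+(u-1)²), y = -(u²+v²-u)/(v²+(u-1)²), the quadratic system ẋ = -y + x² - y², ẏ = x + 2xy is transformed into the linear center u̇ = -v, v̇ = u (at points where v²+(u-1)² ≠ 0). -/
/-- the change of variables transforms the quadratic isochronous
center S₁ into the linear center `u̇ = -v, v̇ = u`. -/
theorem stmt_1 (u v x y : ℝ → ℝ) (du dv : ℝ) (t : ℝ)
    (hxdef : ∀ s, x s = -v s / (v s ^ 2 + (u s - 1) ^ 2))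
    (hydef : ∀ s, y s = -(u s ^ 2 + v s ^ 2 - u s) / (v s ^ 2 + (u s - 1) ^ 2))
    (hD : v t ^ 2 + (u t - 1) ^ 2 ≠ 0)
    (hu : HasDerivAt u du t) (hv : HasDerivAt v dv t)
    (hx : HasDerivAt x (-y t + x t ^ 2 - y t ^ 2) t)
    (hy : HasDerivAt y (x t + 2 * x t * y t) t) :
    du = -v t ∧ dv = u t := by
  have hden : HasDerivAt (fun s => v s ^ 2 + (u s - 1) ^ 2)
      ((2 : ℕ) * v t ^ 1 * dv + (2 : ℕ) * (u t - 1) ^ 1 * du) t :=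
    (hv.pow 2).add ((hu.sub_const 1).pow 2)
  have hxeq : x = fun s => -v s / (v s ^ 2 + (u s - 1) ^ 2) := funext hxdef
  have hyeq : y = fun s => -(u s ^ 2 + v s ^ 2 - u s) / (v s ^ 2 + (u s - 1) ^ 2) :=
    funext hydef
  have hx' := (hv.neg.div hden hD)
  have hy' := (((((hu.pow 2).add (hv.pow 2)).sub hu).neg).div hden hD)
  rw [hxeq] at hx
  rw [hyeq] at hy
  have key1 := hx'.unique hx
  have key2 := hy'.unique hy
  simp only [hxdef, hydef] at key1 key2
  field_simp at key1 key2
  simp only [Pi.neg_apply, Pi.sub_apply, Pi.add_apply, Pi.pow_apply, Nat.cast_ofNat] at key1 key2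
  have hDn : ∀ n : ℕ, (v t ^ 2 + (u t - 1) ^ 2) ^ n ≠ 0 := fun n => pow_ne_zero n hD
  constructor
  · have h1 : (v t ^ 2 + (u t - 1) ^ 2) ^ 7 * (du + v t) = 0 := by
      linear_combination (2 * v t * (u t - 1) * (v t ^ 2 + (u t - 1) ^ 2) ^ 5) * key1 -
        ((v t ^ 2 - (u t - 1) ^ 2) * (v t ^ 2 + (u t - 1) ^ 2) ^ 5) * key2
    have := (mul_eq_zero.1 h1).resolve_left (hDn 7)
    linarith
  · have h2 : (v t ^ 2 + (u t - 1) ^ 2) ^ 7 * (dv - u t) = 0 := by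
      linear_combination ((v t ^ 2 - (u t - 1) ^ 2) * (v t ^ 2 + (u t - 1) ^ 2) ^ 5) * key1 +
        ((2 * v t * (u t - 1)) * (v t ^ 2 + (u t - 1) ^ 2) ^ 5) * key2
    have := (mul_eq_zero.1 h2).resolve_left (hDn 7)
    linarith
end

section
/- For r ∈ (-1,1) and θ with 1 + r cos θ > 0, the function φ(r,θ) = (1/√(1-r²))(θ - 2 arctan(√((1-r)/(1+r)) tan(θ/2))) satisfies ∂φ/∂r (r,θ) = r·φ(r,θ)/(1-r²) + sin θ/((1-r²)(1+r cos θ)). -/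
set_option maxHeartbeats 1000000


open Real

/-- the partial derivative of φ with respect to r. -/
theorem stmt_5 (φ : ℝ → ℝ → ℝ)
    (hφ : ∀ r θ, φ r θ =
      (1 / Real.sqrt (1 - r ^ 2)) *
        (θ - 2 * Real.arctan (Real.sqrt ((1 - r) / (1 + r)) * Real.tan (θ / 2))))
    (r θ : ℝ) (hr : r ∈ Set.Ioo (-1 : ℝ) 1) (hθ : θ ∈ Set.Ioo (-π) π)
    (hden : 1 + r * Real.cos θ > 0) :
    HasDerivAt (fun s => φ s θ)
      (r * φ r θ / (1 - r ^ 2) +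
        Real.sin θ / ((1 - r ^ 2) * (1 + r * Real.cos θ))) r := by
  obtain ⟨hr1, hr2⟩ := hr
  have h1r : (0:ℝ) < 1 - r := by linarith
  have h1r' : (0:ℝ) < 1 + r := by linarith
  have hu : (0:ℝ) < 1 - r ^ 2 := by nlinarith
  have hq : (0:ℝ) < (1 - r) / (1 + r) := div_pos h1r h1r'
  have hU : (0:ℝ) < Real.sqrt (1 - r ^ 2) := Real.sqrt_pos.mpr hu
  have hQ : (0:ℝ) < Real.sqrt ((1 - r) / (1 + r)) := Real.sqrt_pos.mpr hq
  set t : ℝ := Real.tan (θ / 2) with ht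
  set U : ℝ := Real.sqrt (1 - r ^ 2) with hUdef
  set Q : ℝ := Real.sqrt ((1 - r) / (1 + r)) with hQdef
  have hU2 : U ^ 2 = 1 - r ^ 2 := Real.sq_sqrt hu.le
  have hQ2 : Q ^ 2 = (1 - r) / (1 + r) := Real.sq_sqrt hq.le
  have hUQ : U * Q = 1 - r := by
    rw [hUdef, hQdef, ← Real.sqrt_mul hu.le,
      show (1 - r ^ 2) * ((1 - r) / (1 + r)) = (1 - r) ^ 2 by field_simp; ring]
    exact Real.sqrt_sq h1r.le
  -- derivatives
  have hinner : HasDerivAt (fun s : ℝ => (1 - s) / (1 + s)) (-2 / (1 + r) ^ 2) r := by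
    have h := (((hasDerivAt_id r).const_sub 1).div ((hasDerivAt_id r).const_add 1)
      (by positivity))
    refine h.congr_deriv ?_
    symm
    simp only [id]
    have : (1:ℝ) + r ≠ 0 := by positivity
    field_simp
    ring
  have hg : HasDerivAt (fun s : ℝ => Real.sqrt ((1 - s) / (1 + s)))
      ((-2 / (1 + r) ^ 2) / (2 * Q)) r := hinner.sqrt (ne_of_gt hq)
  have harc : HasDerivAt (fun s : ℝ => Real.arctan (Real.sqrt ((1 - s) / (1 + s)) * t))
      (1 / (1 + (Q * t) ^ 2) * ((-2 / (1 + r) ^ 2) / (2 * Q) * t)) r :=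
    (hg.mul_const t).arctan
  have hA : HasDerivAt (fun s : ℝ => θ - 2 * Real.arctan (Real.sqrt ((1 - s) / (1 + s)) * t))
      (-(2 * (1 / (1 + (Q * t) ^ 2) * ((-2 / (1 + r) ^ 2) / (2 * Q) * t)))) r :=
    ((harc.const_mul 2).const_sub θ)
  have hUd : HasDerivAt (fun s : ℝ => 1 - s ^ 2) (-(2 * r)) r := by
    simpa using ((hasDerivAt_pow 2 r).const_sub 1)
  have hS : HasDerivAt (fun s : ℝ => Real.sqrt (1 - s ^ 2))
      ((-(2 * r)) / (2 * U)) r := hUd.sqrt (ne_of_gt hu)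
  have hf : HasDerivAt (fun s : ℝ => 1 / Real.sqrt (1 - s ^ 2))
      ((0 * U - 1 * ((-(2 * r)) / (2 * U))) / U ^ 2) r :=
    (hasDerivAt_const r 1).div hS (ne_of_gt hU)
  have hprod := hf.mul hA
  have hfun : (fun s => φ s θ) = (fun s : ℝ => (1 / Real.sqrt (1 - s ^ 2)) *
      (θ - 2 * Real.arctan (Real.sqrt ((1 - s) / (1 + s)) * t))) := by
    funext s; rw [hφ]
  rw [hfun, hφ]
  refine hprod.congr_deriv ?_
  symm
  set A : ℝ := θ - 2 * Real.arctan (Q * t) with hAdef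
  -- trig facts
  have hc : 0 < Real.cos (θ / 2) := by
    apply Real.cos_pos_of_mem_Ioo
    constructor <;> [linarith [hθ.1]; linarith [hθ.2]]
  set c : ℝ := Real.cos (θ / 2) with hcdef
  set s : ℝ := Real.sin (θ / 2) with hsdef
  have htsc : t = s / c := Real.tan_eq_sin_div_cos (θ / 2)
  have hsin : Real.sin θ = 2 * s * c := by
    rw [hcdef, hsdef, ← Real.sin_two_mul]; ring_nf
  have hcos : Real.cos θ = 2 * c ^ 2 - 1 := by
    rw [hcdef, ← Real.cos_two_mul]; ring_nf
  have hsc : s ^ 2 + c ^ 2 = 1 := Real.sin_sq_add_cos_sq (θ / 2)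
  have hden2 : (0:ℝ) < 1 + r * (2 * c ^ 2 - 1) := by rwa [hcos] at hden
  -- E1 : coefficient of A
  have E1 : (0 * U - 1 * ((-(2 * r)) / (2 * U))) / U ^ 2 = r * (1 / U) / (1 - r ^ 2) := by
    rw [hU2]
    field_simp
    ring
  -- E2 : second summand
  have hkey : 1 + (Q * t) ^ 2 = (1 + r * (2 * c ^ 2 - 1)) / (c ^ 2 * (1 + r)) := by
    have h1 : (Q * t) ^ 2 = Q ^ 2 * s ^ 2 / c ^ 2 := by rw [htsc]; ring
    have hs2 : s ^ 2 = 1 - c ^ 2 := by linarith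
    rw [h1, hQ2, hs2]
    field_simp
    ring
  have E2 : (1 / U) * (-(2 * (1 / (1 + (Q * t) ^ 2) * ((-2 / (1 + r) ^ 2) / (2 * Q) * t)))) =
      Real.sin θ / ((1 - r ^ 2) * (1 + r * Real.cos θ)) := by
    rw [hkey, hsin, hcos, htsc]
    have hQr : Q = (1 - r) / U := by
      field_simp [ne_of_gt hU] at hUQ ⊢
      linarith [hUQ]
    rw [hQr]
    field_simp
    nlinarith [hU2, sq_nonneg U, hden2.ne', mul_pos (mul_pos hU hc) hden2]
  rw [hsin, hcos]
  rw [hsin, hcos] at E2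
  rw [← hUdef]
  linear_combination (-A) * E1 - E2
end

section
/- For r ∈ (0,1), ∫₀^π log(1 + r cos θ) dθ = -π·log(2(1 - √(1-r²))/r²). -/
open Real

lemma keyA (ρ : ℝ) (h0 : 0 ≤ ρ) (h1 : ρ < 1) :
    ∫ θ in (0:ℝ)..(2*π), Real.log (1 + 2*ρ*Real.cos θ + ρ^2) = 0 := by
  set f : ℂ → ℂ := fun z => Complex.log (1 + ρ*z) with hf
  have hre : ∀ z : ℂ, z ∈ Metric.closedBall (0:ℂ) 1 → 0 < (1 + (ρ:ℂ)*z).re := by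
    intro z hz
    simp only [Metric.mem_closedBall, dist_zero_right] at hz
    have : |z.re| ≤ 1 := le_trans (Complex.abs_re_le_norm z) hz
    have := abs_le.mp this
    simp only [Complex.add_re, Complex.one_re, Complex.mul_re, Complex.ofReal_re,
      Complex.ofReal_im, zero_mul, sub_zero]
    nlinarith
  have hdiff : ∀ z ∈ Metric.closedBall (0:ℂ) 1, DifferentiableAt ℂ f z := by
    intro z hz
    exact (Complex.differentiableAt_log (Complex.mem_slitPlane_iff.2
      (Or.inl (hre z hz)))).comp (f := fun z : ℂ => 1 + (ρ:ℂ)*z) z (by fun_prop)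
  have hcauchy : (∮ z in C((0:ℂ), 1), (z - 0)⁻¹ • f z) = (2 * π * Complex.I : ℂ) • f 0 := by
    apply Complex.circleIntegral_sub_inv_smul_of_differentiable_on_off_countable
      Set.countable_empty (by simp)
    · exact fun z hz => (hdiff z hz).continuousAt.continuousWithinAt
    · exact fun z hz => hdiff z (Metric.ball_subset_closedBall hz.1)
  have hf0 : f 0 = 0 := by simp [hf]
  rw [hf0, smul_zero] at hcauchy
  have hcm : ∀ θ : ℝ, circleMap 0 1 θ ≠ 0 := fun θ => circleMap_ne_center one_ne_zero
  have hci : (∮ z in C((0:ℂ), 1), (z - 0)⁻¹ • f z)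
      = ∫ θ in (0:ℝ)..(2*π), Complex.I * f (circleMap 0 1 θ) := by
    rw [circleIntegral]
    apply intervalIntegral.integral_congr
    intro θ _
    simp only [deriv_circleMap, smul_eq_mul, sub_zero]
    rw [mul_comm (circleMap 0 1 θ) Complex.I, mul_assoc,
      mul_inv_cancel_left₀ (hcm θ)]
  have h2 : (∫ θ in (0:ℝ)..(2*π), Complex.I * f (circleMap 0 1 θ)) = 0 := by
    rw [← hci]; exact hcauchy
  rw [intervalIntegral.integral_const_mul] at h2
  have h3 : (∫ θ in (0:ℝ)..(2*π), f (circleMap 0 1 θ)) = 0 := by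
    rcases mul_eq_zero.mp h2 with h | h
    · exact absurd h Complex.I_ne_zero
    · exact h
  have hcont : Continuous fun θ : ℝ => f (circleMap 0 1 θ) := by
    apply continuous_iff_continuousAt.2
    intro θ
    have hmem : circleMap 0 1 θ ∈ Metric.closedBall (0:ℂ) 1 := by
      simp [Metric.mem_closedBall, dist_zero_right]
    have hg : ContinuousAt (fun θ : ℝ => 1 + (ρ:ℂ) * circleMap 0 1 θ) θ :=
      (continuous_const.add (continuous_const.mul (continuous_circleMap 0 1))).continuousAt
    exact ContinuousAt.comp (g := Complex.log)
      (f := fun θ : ℝ => 1 + (ρ:ℂ) * circleMap 0 1 θ) (x := θ)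
      (continuousAt_clog (Complex.mem_slitPlane_iff.2 (Or.inl (hre _ hmem)))) hg
  have h4 : (∫ θ in (0:ℝ)..(2*π), (f (circleMap 0 1 θ)).re) = 0 := by
    have hInt : IntervalIntegrable (fun θ : ℝ => f (circleMap 0 1 θ))
        MeasureTheory.volume 0 (2*π) := hcont.intervalIntegrable 0 (2*π)
    have := Complex.reCLM.intervalIntegral_comp_comm hInt
    simpa [h3] using this
  have h5 : ∀ θ : ℝ, (f (circleMap 0 1 θ)).re
      = (1/2) * Real.log (1 + 2*ρ*Real.cos θ + ρ^2) := by
    intro θ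
    have hpos : (0:ℝ) < 1 + 2*ρ*Real.cos θ + ρ^2 := by
      nlinarith [Real.neg_one_le_cos θ, Real.cos_le_one θ]
    have habs : ‖(1 + (ρ:ℂ) * circleMap 0 1 θ)‖
        = Real.sqrt (1 + 2*ρ*Real.cos θ + ρ^2) := by
      rw [Complex.norm_def]
      congr 1
      simp [Complex.normSq_apply, circleMap, Complex.exp_ofReal_mul_I_re,
        Complex.exp_ofReal_mul_I_im]
      nlinarith [Real.sin_sq_add_cos_sq θ]
    rw [show f (circleMap 0 1 θ) = Complex.log (1 + ρ * circleMap 0 1 θ) from rfl,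
      Complex.log_re, habs, Real.log_sqrt hpos.le]
    ring
  have h6 : (∫ θ in (0:ℝ)..(2*π), Real.log (1 + 2*ρ*Real.cos θ + ρ^2))
      = 2 * ∫ θ in (0:ℝ)..(2*π), (f (circleMap 0 1 θ)).re := by
    rw [← intervalIntegral.integral_const_mul]
    apply intervalIntegral.integral_congr
    intro θ _
    show Real.log (1 + 2*ρ*Real.cos θ + ρ^2) = 2 * (f (circleMap 0 1 θ)).re
    rw [h5 θ]; ring
  rw [h6, h4, mul_zero]

/-- the value of Λ₀⁰(r) = ∫₀^π log(1 + r cos θ) dθ. -/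
theorem stmt_7 (r : ℝ) (hr : r ∈ Set.Ioo (0 : ℝ) 1) :
    ∫ θ in (0 : ℝ)..π, Real.log (1 + r * Real.cos θ) =
      -π * Real.log (2 * (1 - Real.sqrt (1 - r ^ 2)) / r ^ 2) := by
  obtain ⟨hr0, hr1⟩ := hr
  set s : ℝ := Real.sqrt (1 - r ^ 2) with hsdef
  have h1r2 : (0:ℝ) ≤ 1 - r ^ 2 := by nlinarith
  have hs : s ^ 2 = 1 - r ^ 2 := Real.sq_sqrt h1r2
  have hs0 : 0 ≤ s := Real.sqrt_nonneg _
  have hs1 : s < 1 := by nlinarith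
  set ρ : ℝ := (1 - s) / r with hρdef
  have hrne : r ≠ 0 := ne_of_gt hr0
  have hρ0 : 0 < ρ := div_pos (by linarith) hr0
  have h1rs : 1 - s < r := by nlinarith [mul_pos hr0 (by linarith : (0:ℝ) < 1 - r)]
  have hρ1 : ρ < 1 := (div_lt_one hr0).2 h1rs
  have key1 : r * (1 + ρ ^ 2) = 2 * ρ := by
    rw [hρdef]
    field_simp
    nlinarith [hs]
  have hbpos : (0:ℝ) < 1 + ρ ^ 2 := by positivity
  have key2 : 1 + ρ ^ 2 = 2 * (1 - s) / r ^ 2 := by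
    rw [hρdef]
    field_simp
    nlinarith [hs]
  have hapos : ∀ θ : ℝ, (0:ℝ) < 1 + 2 * ρ * Real.cos θ + ρ ^ 2 := by
    intro θ
    nlinarith [Real.neg_one_le_cos θ, Real.cos_le_one θ]
  set g : ℝ → ℝ := fun θ => Real.log (1 + 2 * ρ * Real.cos θ + ρ ^ 2) with hgdef
  have hgcont : Continuous g := by
    apply continuous_iff_continuousAt.2
    intro θ
    have hin : ContinuousAt (fun θ : ℝ => 1 + 2 * ρ * Real.cos θ + ρ ^ 2) θ := by fun_prop
    exact ContinuousAt.comp (g := Real.log)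
      (f := fun θ : ℝ => 1 + 2 * ρ * Real.cos θ + ρ ^ 2) (x := θ)
      (Real.continuousAt_log (ne_of_gt (hapos θ))) hin
  have hsub : (∫ θ in π..(2*π), g θ) = ∫ θ in (0:ℝ)..π, g θ := by
    have h := intervalIntegral.integral_comp_sub_left (a := (0:ℝ)) (b := π) g (2*π)
    rw [show 2*π - π = π by ring, show 2*π - 0 = 2*π by ring] at h
    rw [← h]
    apply intervalIntegral.integral_congr
    intro θ _
    simp only [hgdef, Real.cos_sub, Real.cos_two_pi, Real.sin_two_pi]
    ring_nf
  have hsplit : (∫ θ in (0:ℝ)..π, g θ) + (∫ θ in π..(2*π), g θ)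
      = ∫ θ in (0:ℝ)..(2*π), g θ :=
    intervalIntegral.integral_add_adjacent_intervals
      (hgcont.intervalIntegrable 0 π) (hgcont.intervalIntegrable π (2*π))
  have hA : (∫ θ in (0:ℝ)..(2*π), g θ) = 0 := keyA ρ hρ0.le hρ1
  have hg0 : (∫ θ in (0:ℝ)..π, g θ) = 0 := by
    rw [hsub] at hsplit
    rw [hA] at hsplit
    linarith
  have hptwise : ∀ θ : ℝ, Real.log (1 + r * Real.cos θ)
      = g θ - Real.log (1 + ρ ^ 2) := by
    intro θ
    have hx : 1 + r * Real.cos θ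
        = (1 + 2 * ρ * Real.cos θ + ρ ^ 2) / (1 + ρ ^ 2) := by
      rw [eq_div_iff hbpos.ne']
      nlinarith [key1, Real.cos_le_one θ, Real.neg_one_le_cos θ]
    rw [hx, Real.log_div (hapos θ).ne' hbpos.ne']
  calc (∫ θ in (0 : ℝ)..π, Real.log (1 + r * Real.cos θ))
      = ∫ θ in (0 : ℝ)..π, (g θ - Real.log (1 + ρ ^ 2)) := by
        apply intervalIntegral.integral_congr
        intro θ _
        exact hptwise θ
    _ = (∫ θ in (0 : ℝ)..π, g θ) - ∫ θ in (0:ℝ)..π, Real.log (1 + ρ ^ 2) :=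
        intervalIntegral.integral_sub (hgcont.intervalIntegrable 0 π)
          (intervalIntegrable_const)
    _ = -π * Real.log (2 * (1 - s) / r ^ 2) := by
        rw [hg0, intervalIntegral.integral_const, ← key2]
        simp [smul_eq_mul]
end

section
/- For r ∈ (0,1), ∫₀^π log(1 + r cos θ)/(1 + r cos θ) dθ = (π·log(1-r²) - Λ₀⁰(r))/√(1-r²), where Λ₀⁰(r) = ∫₀^π log(1 + r cos θ) dθ. -/
open Real MeasureTheory Set intervalIntegral

/-- the value of Λ₁⁰(r) in terms of Λ₀⁰(r). -/
theorem stmt_8 (r : ℝ) (hr : r ∈ Set.Ioo (0 : ℝ) 1) :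
    ∫ θ in (0 : ℝ)..π, Real.log (1 + r * Real.cos θ) / (1 + r * Real.cos θ) =
      (π * Real.log (1 - r ^ 2) -
        ∫ θ in (0 : ℝ)..π, Real.log (1 + r * Real.cos θ)) /
        Real.sqrt (1 - r ^ 2) := by
  obtain ⟨hr0, hr1⟩ := hr
  have hr2 : (0:ℝ) < 1 - r^2 := by nlinarith
  set s := Real.sqrt (1 - r^2) with hs_def
  have hs : 0 < s := Real.sqrt_pos.mpr hr2
  have hs2 : s^2 = 1 - r^2 := Real.sq_sqrt hr2.le
  have hden : ∀ x : ℝ, 0 < 1 - r * Real.cos x := by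
    intro x; nlinarith [Real.neg_one_le_cos x, Real.cos_le_one x]
  have hden' : ∀ x : ℝ, 0 < 1 + r * Real.cos x := by
    intro x; nlinarith [Real.neg_one_le_cos x, Real.cos_le_one x]
  set u : ℝ → ℝ := fun φ => (Real.cos φ - r) / (1 - r * Real.cos φ) with hu_def
  set g : ℝ → ℝ := fun φ => Real.arccos (u φ) with hg_def
  have hcos_mem : ∀ φ ∈ Ioo (0:ℝ) π, Real.cos φ ∈ Ioo (-1:ℝ) 1 := by
    intro φ hφ
    constructor
    · have := Real.cos_lt_cos_of_nonneg_of_le_pi hφ.1.le le_rfl hφ.2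
      simpa using this
    · have := Real.cos_lt_cos_of_nonneg_of_le_pi le_rfl hφ.2.le hφ.1
      simpa using this
  have hu_mem : ∀ φ ∈ Ioo (0:ℝ) π, u φ ∈ Ioo (-1:ℝ) 1 := by
    intro φ hφ
    obtain ⟨h1, h2⟩ := hcos_mem φ hφ
    have hd := hden φ
    constructor
    · rw [hu_def]; dsimp only; rw [lt_div_iff₀ hd]; nlinarith
    · rw [hu_def]; dsimp only; rw [div_lt_iff₀ hd]; nlinarith
  have hg_deriv : ∀ φ ∈ Ioo (0:ℝ) π, HasDerivAt g (s / (1 - r * Real.cos φ)) φ := by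
    intro φ hφ
    obtain ⟨hu1, hu2⟩ := hu_mem φ hφ
    have hd := hden φ
    have hsin : 0 < Real.sin φ := Real.sin_pos_of_pos_of_lt_pi hφ.1 hφ.2
    have h1 : HasDerivAt (fun x => Real.cos x - r) (-Real.sin φ) φ :=
      (Real.hasDerivAt_cos φ).sub_const r
    have h2 : HasDerivAt (fun x => 1 - r * Real.cos x) (r * Real.sin φ) φ := by
      have := ((Real.hasDerivAt_cos φ).const_mul r).const_sub 1
      simpa using this
    have hu' : HasDerivAt u
        ((-Real.sin φ * (1 - r * Real.cos φ) - (Real.cos φ - r) * (r * Real.sin φ)) /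
          (1 - r * Real.cos φ)^2) φ := h1.div h2 hd.ne'
    have harc : HasDerivAt Real.arccos (-(1 / Real.sqrt (1 - u φ ^ 2))) (u φ) :=
      Real.hasDerivAt_arccos hu1.ne' hu2.ne
    have hcomp := harc.comp φ hu'
    refine hcomp.congr_deriv ?_
    symm
    have hsq : 1 - u φ ^ 2 = (s * Real.sin φ / (1 - r * Real.cos φ))^2 := by
      rw [hu_def]
      dsimp only
      have hd2 : (1 - r * Real.cos φ)^2 ≠ 0 := by positivity
      rw [div_pow, div_pow, mul_pow, hs2, eq_div_iff hd2, sub_mul, div_mul_cancel₀ _ hd2]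
      linear_combination (r^2 - 1) * Real.sin_sq_add_cos_sq φ
    have hsqrt : Real.sqrt (1 - u φ ^ 2) = s * Real.sin φ / (1 - r * Real.cos φ) := by
      rw [hsq, Real.sqrt_sq (by positivity)]
    rw [hsqrt]
    field_simp
    linear_combination hs2
  -- facts about g
  have hgcos : ∀ φ ∈ Ioo (0:ℝ) π, Real.cos (g φ) = u φ := fun φ hφ =>
    Real.cos_arccos (hu_mem φ hφ).1.le (hu_mem φ hφ).2.le
  have harccos_mem : ∀ x : ℝ, -1 < x → x < 1 → Real.arccos x ∈ Ioo (0:ℝ) π := by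
    intro x h1 h2
    refine ⟨Real.arccos_pos.mpr h2, lt_of_le_of_ne (Real.arccos_le_pi _) (fun h => ?_)⟩
    have := Real.arccos_eq_pi.mp h
    linarith
  have hg_mem : ∀ φ ∈ Ioo (0:ℝ) π, g φ ∈ Ioo (0:ℝ) π := fun φ hφ =>
    harccos_mem _ (hu_mem φ hφ).1 (hu_mem φ hφ).2
  have hg_inj : InjOn g (Ioo (0:ℝ) π) := by
    intro a ha b hb hab
    have h1 : u a = u b := by
      have := congrArg Real.cos hab
      rwa [hgcos a ha, hgcos b hb] at this
    have hca : Real.cos a = Real.cos b := by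
      have hda := hden a; have hdb := hden b
      rw [hu_def] at h1; dsimp only at h1
      rw [div_eq_div_iff hda.ne' hdb.ne'] at h1
      have h2 : (Real.cos a - Real.cos b) * (1 - r^2) = 0 := by linear_combination h1
      rcases mul_eq_zero.mp h2 with h | h
      · linarith
      · linarith
    exact Real.injOn_cos ⟨ha.1.le, ha.2.le⟩ ⟨hb.1.le, hb.2.le⟩ hca
  have hg_image : g '' (Ioo (0:ℝ) π) = Ioo (0:ℝ) π := by
    apply Subset.antisymm
    · rintro _ ⟨φ, hφ, rfl⟩; exact hg_mem φ hφ
    · intro θ hθ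
      have hdθ := hden' θ
      obtain ⟨hc1, hc2⟩ := hcos_mem θ hθ
      set v := (Real.cos θ + r) / (1 + r * Real.cos θ) with hv
      have hv1 : -1 < v := by rw [hv, lt_div_iff₀ hdθ]; nlinarith
      have hv2 : v < 1 := by rw [hv, div_lt_iff₀ hdθ]; nlinarith
      refine ⟨Real.arccos v, harccos_mem v hv1 hv2, ?_⟩
      have hcv : Real.cos (Real.arccos v) = v := Real.cos_arccos hv1.le hv2.le
      rw [hg_def, hu_def]; dsimp only
      rw [hcv]
      have hveq : (v - r) / (1 - r * v) = Real.cos θ := by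
        have hdv : 0 < 1 - r * v := by nlinarith
        rw [div_eq_iff hdv.ne', hv]
        linear_combination div_mul_cancel₀ (Real.cos θ + r) hdθ.ne'
      rw [hveq, Real.arccos_cos hθ.1.le hθ.2.le]
  -- continuity
  have hlog_cont : Continuous (fun φ : ℝ => Real.log (1 - r * Real.cos φ)) :=
    Continuous.log (continuous_const.sub (continuous_const.mul Real.continuous_cos))
      (fun x => (hden x).ne')
  -- main substitution
  have key : (∫ θ in (0:ℝ)..π, Real.log (1 + r * Real.cos θ) / (1 + r * Real.cos θ))
      = ∫ φ in (0:ℝ)..π, (Real.log (1 - r^2) - Real.log (1 - r * Real.cos φ)) / s := by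
    rw [intervalIntegral.integral_of_le Real.pi_pos.le,
        intervalIntegral.integral_of_le Real.pi_pos.le,
        MeasureTheory.integral_Ioc_eq_integral_Ioo,
        MeasureTheory.integral_Ioc_eq_integral_Ioo]
    calc (∫ θ in Ioo (0:ℝ) π, Real.log (1 + r * Real.cos θ) / (1 + r * Real.cos θ))
        = ∫ θ in g '' Ioo (0:ℝ) π, Real.log (1 + r * Real.cos θ) / (1 + r * Real.cos θ) := by
          rw [hg_image]
      _ = ∫ φ in Ioo (0:ℝ) π, |s / (1 - r * Real.cos φ)| •
            (Real.log (1 + r * Real.cos (g φ)) / (1 + r * Real.cos (g φ))) :=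
          MeasureTheory.integral_image_eq_integral_abs_deriv_smul measurableSet_Ioo
            (fun φ hφ => (hg_deriv φ hφ).hasDerivWithinAt) hg_inj _
      _ = ∫ φ in Ioo (0:ℝ) π, (Real.log (1 - r^2) - Real.log (1 - r * Real.cos φ)) / s := by
          apply MeasureTheory.setIntegral_congr_fun measurableSet_Ioo
          intro φ hφ
          dsimp only
          have hd := hden φ
          have h1 : 1 + r * Real.cos (g φ) = (1 - r^2) / (1 - r * Real.cos φ) := by
            rw [hgcos φ hφ, hu_def]; dsimp only
            field_simp
            ring
          rw [h1, smul_eq_mul, abs_of_pos (by positivity),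
            Real.log_div hr2.ne' hd.ne']
          field_simp
          linear_combination
            (Real.log (1 - r^2) - Real.log (1 - r * Real.cos φ)) * hs2
  rw [key]
  have hInt1 : IntervalIntegrable (fun φ => Real.log (1 - r * Real.cos φ)) volume 0 π :=
    hlog_cont.intervalIntegrable 0 π
  rw [intervalIntegral.integral_div, intervalIntegral.integral_sub
    (intervalIntegrable_const) hInt1, intervalIntegral.integral_const]
  have hswap : (∫ φ in (0:ℝ)..π, Real.log (1 - r * Real.cos φ))
      = ∫ θ in (0:ℝ)..π, Real.log (1 + r * Real.cos θ) := by
    have h := intervalIntegral.integral_comp_sub_left (a := (0:ℝ)) (b := π)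
      (fun θ => Real.log (1 + r * Real.cos θ)) π
    simp only [sub_zero, sub_self] at h
    rw [← h]
    congr 1
    ext x
    rw [Real.cos_pi_sub]
    ring_nf
  rw [hswap, sub_zero, smul_eq_mul]
end

section
/- For r ∈ (0,1), the derivative of Λ₀⁰(r) = ∫₀^π log(1 + r cos θ) dθ equals -π(1 - √(1-r²))/(r·√(1-r²)). -/
open Real

lemma aux_deriv (r w : ℝ) (hr0 : 0 < r) (hr1 : r < 1) (hw0 : 0 < w)
    (hw2 : w ^ 2 = 1 - r ^ 2) (θ : ℝ) :
    HasDerivAt (fun x : ℝ => (x - (2/w) * (x/2 +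
        Real.arctan ((w/(1+r)-1) * Real.sin x / ((1+w/(1+r)) + (1-w/(1+r)) * Real.cos x))))/r)
      (Real.cos θ / (1 + r * Real.cos θ)) θ := by
  have hr1' : (0:ℝ) < 1 + r := by linarith
  set b := w/(1+r) with hbdef
  have hb0 : 0 < b := div_pos hw0 hr1'
  have hb1 : b < 1 := by
    rw [hbdef, div_lt_one hr1']
    nlinarith [sq_nonneg (w - (1+r))]
  have hc1 := Real.cos_le_one θ
  have hc2 := Real.neg_one_le_cos θ
  have hDpos : 0 < (1+b) + (1-b) * Real.cos θ := by nlinarith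
  have hDne : ((1+b) + (1-b) * Real.cos θ) ≠ 0 := ne_of_gt hDpos
  have hrc : 0 < 1 + r * Real.cos θ := by nlinarith
  have hN : HasDerivAt (fun x : ℝ => (b-1) * Real.sin x) ((b-1) * Real.cos θ) θ :=
    (Real.hasDerivAt_sin θ).const_mul (b-1)
  have hD : HasDerivAt (fun x : ℝ => (1+b) + (1-b) * Real.cos x) ((1-b) * (-Real.sin θ)) θ :=
    ((Real.hasDerivAt_cos θ).const_mul (1-b)).const_add (1+b)
  have harc : HasDerivAt
      (fun x : ℝ => Real.arctan ((b-1) * Real.sin x / ((1+b) + (1-b) * Real.cos x)))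
      (1 / (1 + ((b-1) * Real.sin θ / ((1+b) + (1-b) * Real.cos θ))^2) *
        (((b-1) * Real.cos θ * ((1+b) + (1-b) * Real.cos θ) -
          (b-1) * Real.sin θ * ((1-b) * (-Real.sin θ))) / ((1+b) + (1-b) * Real.cos θ)^2)) θ :=
    (hN.div hD hDne).arctan
  have h2 : HasDerivAt (fun x : ℝ => x/2 +
      Real.arctan ((b-1) * Real.sin x / ((1+b) + (1-b) * Real.cos x)))
      (1/2 + 1 / (1 + ((b-1) * Real.sin θ / ((1+b) + (1-b) * Real.cos θ))^2) *
        (((b-1) * Real.cos θ * ((1+b) + (1-b) * Real.cos θ) -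
          (b-1) * Real.sin θ * ((1-b) * (-Real.sin θ))) / ((1+b) + (1-b) * Real.cos θ)^2)) θ :=
    ((hasDerivAt_id θ).div_const 2).add harc
  have h4 : HasDerivAt (fun x : ℝ => (x - (2/w) * (x/2 +
      Real.arctan ((b-1) * Real.sin x / ((1+b) + (1-b) * Real.cos x))))/r)
      ((1 - (2/w) * (1/2 + 1 / (1 + ((b-1) * Real.sin θ / ((1+b) + (1-b) * Real.cos θ))^2) *
        (((b-1) * Real.cos θ * ((1+b) + (1-b) * Real.cos θ) -
          (b-1) * Real.sin θ * ((1-b) * (-Real.sin θ))) / ((1+b) + (1-b) * Real.cos θ)^2)))/r) θ :=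
    ((hasDerivAt_id θ).sub (h2.const_mul (2/w))).div_const r
  convert h4 using 1
  have hnum : (b-1) * Real.cos θ * ((1+b) + (1-b) * Real.cos θ) -
      (b-1) * Real.sin θ * ((1-b) * (-Real.sin θ)) = (b-1) * ((1+b) * Real.cos θ + (1-b)) := by
    linear_combination ((b-1)*(1-b)) * (Real.sin_sq_add_cos_sq θ)
  have hden : ((1+b) + (1-b) * Real.cos θ)^2 + ((b-1) * Real.sin θ)^2 =
      2*(1+b^2) + 2*(1-b^2) * Real.cos θ := by
    linear_combination ((b-1)^2) * (Real.sin_sq_add_cos_sq θ)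
  have hQpos : 0 < 2*(1+b^2) + 2*(1-b^2) * Real.cos θ := by nlinarith
  have e1 : 1 / (1 + ((b-1) * Real.sin θ / ((1+b) + (1-b) * Real.cos θ))^2) *
        (((b-1) * Real.cos θ * ((1+b) + (1-b) * Real.cos θ) -
          (b-1) * Real.sin θ * ((1-b) * (-Real.sin θ))) / ((1+b) + (1-b) * Real.cos θ)^2) =
      ((b-1) * ((1+b) * Real.cos θ + (1-b))) / (2*(1+b^2) + 2*(1-b^2) * Real.cos θ) := by
    rw [← hnum, ← hden]
    field_simp
  rw [e1]
  have e2 : ((b-1) * ((1+b) * Real.cos θ + (1-b))) / (2*(1+b^2) + 2*(1-b^2) * Real.cos θ) =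
      (w - (1 + r * Real.cos θ)) / (2 * (1 + r * Real.cos θ)) := by
    rw [div_eq_div_iff (ne_of_gt hQpos) (by positivity), hbdef]
    field_simp
    linear_combination (-w*(1-Real.cos θ)) * hw2
  rw [e2]
  have hrc' : 1 + Real.cos θ * r ≠ 0 := by rw [mul_comm]; exact ne_of_gt hrc
  have hwne := ne_of_gt hw0
  have hrne := ne_of_gt hr0
  field_simp
  ring

lemma aux_pos (x : ℝ) (hx : |x| < 1) (t : ℝ) : 0 < 1 + x * Real.cos t := by
  have h1 : |x * Real.cos t| < 1 := by
    rw [abs_mul]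
    calc |x| * |Real.cos t| ≤ |x| * 1 := by
          gcongr; exact Real.abs_cos_le_one t
      _ < 1 := by simpa using hx
  have := (abs_lt.1 h1).1
  linarith

lemma aux_int (r w : ℝ) (hr0 : 0 < r) (hr1 : r < 1) (hw0 : 0 < w)
    (hw2 : w ^ 2 = 1 - r ^ 2) :
    (∫ θ in (0:ℝ)..π, Real.cos θ / (1 + r * Real.cos θ)) = -π * (1 - w) / (r * w) := by
  have habs : |r| < 1 := by rw [abs_of_pos hr0]; exact hr1
  have hcont : Continuous fun θ : ℝ => Real.cos θ / (1 + r * Real.cos θ) :=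
    Real.continuous_cos.div (continuous_const.add (continuous_const.mul Real.continuous_cos))
      fun t => ne_of_gt (aux_pos r habs t)
  have hint : IntervalIntegrable (fun θ : ℝ => Real.cos θ / (1 + r * Real.cos θ))
      MeasureTheory.volume 0 π := hcont.intervalIntegrable 0 π
  have heval := intervalIntegral.integral_eq_sub_of_hasDerivAt
    (f := fun x : ℝ => (x - (2/w) * (x/2 +
        Real.arctan ((w/(1+r)-1) * Real.sin x / ((1+w/(1+r)) + (1-w/(1+r)) * Real.cos x))))/r)
    (fun t _ => aux_deriv r w hr0 hr1 hw0 hw2 t) hint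
  rw [heval]
  simp only [Real.sin_pi, Real.sin_zero, mul_zero, zero_mul, zero_div, Real.arctan_zero,
    add_zero, zero_add, zero_sub, sub_zero]
  have hwne : w ≠ 0 := ne_of_gt hw0
  have hrne : r ≠ 0 := ne_of_gt hr0
  field_simp
  ring

/-- the derivative of Λ₀⁰(r) = ∫₀^π log(1 + r cos θ) dθ. -/
theorem stmt_9 (r : ℝ) (hr : r ∈ Set.Ioo (0 : ℝ) 1) :
    HasDerivAt (fun s => ∫ θ in (0 : ℝ)..π, Real.log (1 + s * Real.cos θ))
      (-π * (1 - Real.sqrt (1 - r ^ 2)) / (r * Real.sqrt (1 - r ^ 2))) r := by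
  obtain ⟨hr0, hr1⟩ := hr
  have h1r : (0:ℝ) < 1 - r ^ 2 := by nlinarith
  have hw0 : 0 < Real.sqrt (1 - r ^ 2) := Real.sqrt_pos.2 h1r
  have hw2 : Real.sqrt (1 - r ^ 2) ^ 2 = 1 - r ^ 2 := Real.sq_sqrt h1r.le
  have habs : |r| < 1 := by rw [abs_of_pos hr0]; exact hr1
  have hε : (0:ℝ) < (1 - r)/2 := by linarith
  have hball : ∀ x ∈ Metric.ball r ((1-r)/2), |x| < (1+r)/2 := by
    intro x hx
    rw [Metric.mem_ball, Real.dist_eq] at hx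
    have h1 := abs_lt.1 hx
    rw [abs_lt]; constructor <;> [nlinarith; nlinarith]
  have hball1 : ∀ x ∈ Metric.ball r ((1-r)/2), |x| < 1 := by
    intro x hx; have := hball x hx; linarith
  have hcont : Continuous fun θ : ℝ => Real.cos θ / (1 + r * Real.cos θ) :=
    Real.continuous_cos.div (continuous_const.add (continuous_const.mul Real.continuous_cos))
      fun t => ne_of_gt (aux_pos r habs t)
  have key := (intervalIntegral.hasDerivAt_integral_of_dominated_loc_of_deriv_le
    (F := fun x t => Real.log (1 + x * Real.cos t))
    (F' := fun x t => Real.cos t / (1 + x * Real.cos t))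
    (x₀ := r) (a := 0) (b := π) (bound := fun _ => 2/(1-r)) (μ := MeasureTheory.volume) (Metric.ball_mem_nhds r hε)
    (Filter.Eventually.of_forall fun x =>
      (Real.measurable_log.comp
        (measurable_const.add (Real.measurable_cos.const_mul x))).aestronglyMeasurable)
    (((continuous_const.add (continuous_const.mul Real.continuous_cos)).log
        fun t => ne_of_gt (aux_pos r habs t)).intervalIntegrable 0 π)
    hcont.aestronglyMeasurable
    (Filter.Eventually.of_forall fun t => fun _ => fun x hx => by
      have hx1 := hball x hx
      have hpos := aux_pos x (by linarith) t
      have hc := Real.abs_cos_le_one t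
      have h2 : (1-r)/2 ≤ |1 + x * Real.cos t| := by
        rw [abs_of_pos hpos]
        have h3 : |x * Real.cos t| ≤ |x| := by
          rw [abs_mul]
          calc |x| * |Real.cos t| ≤ |x| * 1 := by gcongr
            _ = |x| := mul_one _
        have h4 := (abs_le.1 h3).1
        linarith
      rw [Real.norm_eq_abs, abs_div]
      calc |Real.cos t| / |1 + x * Real.cos t| ≤ 1 / ((1-r)/2) :=
            div_le_div₀ zero_le_one hc (by linarith) h2
        _ = 2/(1-r) := one_div_div _ _)
    (intervalIntegrable_const)
    (Filter.Eventually.of_forall fun t => fun _ => fun x hx => by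
      have hpos := aux_pos x (hball1 x hx) t
      have h := (((hasDerivAt_id x).mul_const (Real.cos t)).const_add 1).log (ne_of_gt hpos)
      simpa using h)).2
  rwa [aux_int r _ hr0 hr1 hw0 hw2] at key
end

section
/- The function W̄₅(ρ) = log((1-ρ)/(1+ρ)) - ρ(75ρ¹² - 175ρ¹⁰ + 61ρ⁸ + 95ρ⁶ - 230ρ⁴ + 140ρ² - 30)/(15(ρ²-1)⁶(ρ²+1)) satisfies W̄₅(0) = 0 and W̄₅'(ρ) = ρ⁴(ρ⁴-5)(105ρ⁸ + 105ρ⁶ + 175ρ⁴ - 5ρ² + 4)/(15(ρ²-1)⁷(ρ²+1)²) > 0 for all ρ ∈ (0,1); hence W̄₅ does not vanish on (0,1). -/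
open Real

/-- the reduced Wronskian for family S₃ does not vanish on (0,1). -/
theorem stmt_17 (W : ℝ → ℝ)
    (hW : ∀ ρ, W ρ = Real.log ((1 - ρ) / (1 + ρ)) -
      ρ * (75 * ρ ^ 12 - 175 * ρ ^ 10 + 61 * ρ ^ 8 + 95 * ρ ^ 6 -
          230 * ρ ^ 4 + 140 * ρ ^ 2 - 30) /
        (15 * (ρ ^ 2 - 1) ^ 6 * (ρ ^ 2 + 1))) :
    W 0 = 0 ∧
    (∀ ρ ∈ Set.Ioo (0 : ℝ) 1,
      HasDerivAt W
        (ρ ^ 4 * (ρ ^ 4 - 5) * (105 * ρ ^ 8 + 105 * ρ ^ 6 + 175 * ρ ^ 4 -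
            5 * ρ ^ 2 + 4) /
          (15 * (ρ ^ 2 - 1) ^ 7 * (ρ ^ 2 + 1) ^ 2)) ρ ∧
        ρ ^ 4 * (ρ ^ 4 - 5) * (105 * ρ ^ 8 + 105 * ρ ^ 6 + 175 * ρ ^ 4 -
            5 * ρ ^ 2 + 4) /
          (15 * (ρ ^ 2 - 1) ^ 7 * (ρ ^ 2 + 1) ^ 2) > 0) ∧
    ∀ ρ ∈ Set.Ioo (0 : ℝ) 1, W ρ ≠ 0 := by
  have hW0 : W 0 = 0 := by rw [hW]; norm_num
  have hderiv : ∀ ρ ∈ Set.Ioo (0 : ℝ) 1, HasDerivAt W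
      (ρ ^ 4 * (ρ ^ 4 - 5) * (105 * ρ ^ 8 + 105 * ρ ^ 6 + 175 * ρ ^ 4 -
          5 * ρ ^ 2 + 4) /
        (15 * (ρ ^ 2 - 1) ^ 7 * (ρ ^ 2 + 1) ^ 2)) ρ := by
    rintro ρ ⟨h0, h1⟩
    have hm : (1:ℝ) - ρ ≠ 0 := by nlinarith
    have hp : (1:ℝ) + ρ ≠ 0 := by nlinarith
    have hq : ρ ^ 2 - 1 ≠ 0 := by nlinarith
    have hq1 : ρ ^ 2 + 1 ≠ 0 := by positivity
    -- auxiliary function with log split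
    set g : ℝ → ℝ := fun x => Real.log (1 - x) - Real.log (1 + x) -
      x * (75 * x ^ 12 - 175 * x ^ 10 + 61 * x ^ 8 + 95 * x ^ 6 -
          230 * x ^ 4 + 140 * x ^ 2 - 30) /
        (15 * (x ^ 2 - 1) ^ 6 * (x ^ 2 + 1)) with hg
    have heq : W =ᶠ[nhds ρ] g := by
      filter_upwards [isOpen_Ioo.mem_nhds (show ρ ∈ Set.Ioo (0:ℝ) 1 from ⟨h0, h1⟩)]
        with x hx
      obtain ⟨hx0, hx1⟩ := hx
      rw [hW, hg]
      have : Real.log ((1 - x) / (1 + x)) = Real.log (1 - x) - Real.log (1 + x) :=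
        Real.log_div (by nlinarith) (by nlinarith)
      rw [this]
    have hL1 : HasDerivAt (fun x : ℝ => Real.log (1 - x)) ((0 - 1) / (1 - ρ)) ρ :=
      HasDerivAt.log ((hasDerivAt_const ρ (1:ℝ)).sub (hasDerivAt_id ρ)) hm
    have hL2 : HasDerivAt (fun x : ℝ => Real.log (1 + x)) ((0 + 1) / (1 + ρ)) ρ :=
      HasDerivAt.log ((hasDerivAt_const ρ (1:ℝ)).add (hasDerivAt_id ρ)) hp
    have hP : HasDerivAt (fun x : ℝ => 75 * x ^ 12 - 175 * x ^ 10 + 61 * x ^ 8 +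
        95 * x ^ 6 - 230 * x ^ 4 + 140 * x ^ 2 - 30)
        (75 * (12 * ρ ^ 11) - 175 * (10 * ρ ^ 9) + 61 * (8 * ρ ^ 7) +
          95 * (6 * ρ ^ 5) - 230 * (4 * ρ ^ 3) + 140 * (2 * ρ ^ 1)) ρ := by
      exact (((((((hasDerivAt_pow 12 ρ).const_mul 75).sub
        ((hasDerivAt_pow 10 ρ).const_mul 175)).add
        ((hasDerivAt_pow 8 ρ).const_mul 61)).add
        ((hasDerivAt_pow 6 ρ).const_mul 95)).sub
        ((hasDerivAt_pow 4 ρ).const_mul 230)).add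
        ((hasDerivAt_pow 2 ρ).const_mul 140)).sub_const 30
    have hN : HasDerivAt (fun x : ℝ => x * (75 * x ^ 12 - 175 * x ^ 10 + 61 * x ^ 8 +
        95 * x ^ 6 - 230 * x ^ 4 + 140 * x ^ 2 - 30))
        (1 * (75 * ρ ^ 12 - 175 * ρ ^ 10 + 61 * ρ ^ 8 + 95 * ρ ^ 6 -
          230 * ρ ^ 4 + 140 * ρ ^ 2 - 30) +
         ρ * (75 * (12 * ρ ^ 11) - 175 * (10 * ρ ^ 9) + 61 * (8 * ρ ^ 7) +
          95 * (6 * ρ ^ 5) - 230 * (4 * ρ ^ 3) + 140 * (2 * ρ ^ 1))) ρ :=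
      (hasDerivAt_id ρ).mul hP
    have hsq : HasDerivAt (fun x : ℝ => x ^ 2 - 1) (2 * ρ ^ 1) ρ :=
      (hasDerivAt_pow 2 ρ).sub_const 1
    have hsq' : HasDerivAt (fun x : ℝ => x ^ 2 + 1) (2 * ρ ^ 1) ρ :=
      (hasDerivAt_pow 2 ρ).add_const 1
    have hD : HasDerivAt (fun x : ℝ => 15 * (x ^ 2 - 1) ^ 6 * (x ^ 2 + 1))
        ((6 * (ρ ^ 2 - 1) ^ 5 * (2 * ρ ^ 1)) * 15 * (ρ ^ 2 + 1) +
          15 * (ρ ^ 2 - 1) ^ 6 * (2 * ρ ^ 1)) ρ := by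
      have := ((hsq.fun_pow 6).const_mul 15).mul hsq'
      refine this.congr_deriv ?_
      ring
    have hDne : 15 * (ρ ^ 2 - 1) ^ 6 * (ρ ^ 2 + 1) ≠ 0 := by
      apply mul_ne_zero (mul_ne_zero (by norm_num) (pow_ne_zero _ hq)) hq1
    have hR := hN.div hD hDne
    have hfull := (hL1.sub hL2).sub hR
    have hfin := hfull.congr_of_eventuallyEq heq
    refine hfin.congr_deriv ?_
    field_simp
    ring
  have hpos : ∀ ρ ∈ Set.Ioo (0 : ℝ) 1,
      ρ ^ 4 * (ρ ^ 4 - 5) * (105 * ρ ^ 8 + 105 * ρ ^ 6 + 175 * ρ ^ 4 -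
          5 * ρ ^ 2 + 4) /
        (15 * (ρ ^ 2 - 1) ^ 7 * (ρ ^ 2 + 1) ^ 2) > 0 := by
    rintro ρ ⟨h0, h1⟩
    have hnum : ρ ^ 4 * (ρ ^ 4 - 5) * (105 * ρ ^ 8 + 105 * ρ ^ 6 + 175 * ρ ^ 4 -
        5 * ρ ^ 2 + 4) < 0 := by
      have h4 : (0:ℝ) < ρ ^ 4 := by positivity
      have h5 : ρ ^ 4 - 5 < 0 := by
        have := pow_lt_one₀ h0.le h1 (show (4:ℕ) ≠ 0 by norm_num)
        linarith
      have hq : (0:ℝ) < 105 * ρ ^ 8 + 105 * ρ ^ 6 + 175 * ρ ^ 4 - 5 * ρ ^ 2 + 4 := by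
        nlinarith [sq_nonneg (ρ ^ 2 - 1 / 70), pow_pos h0 8, pow_pos h0 6, sq_nonneg ρ]
      nlinarith [mul_pos h4 hq]
    have hden : 15 * (ρ ^ 2 - 1) ^ 7 * (ρ ^ 2 + 1) ^ 2 < 0 := by
      have h7 : (ρ ^ 2 - 1) ^ 7 < 0 := Odd.pow_neg ⟨3, by norm_num⟩ (by nlinarith)
      have h2 : (0:ℝ) < (ρ ^ 2 + 1) ^ 2 := by positivity
      nlinarith
    exact div_pos_of_neg_of_neg hnum hden
  refine ⟨hW0, fun ρ hρ => ⟨hderiv ρ hρ, hpos ρ hρ⟩, ?_⟩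
  rintro ρ ⟨h0, h1⟩
  have hcont : ContinuousOn W (Set.Icc 0 ρ) := by
    have hWfun : W = fun x => Real.log ((1 - x) / (1 + x)) -
        x * (75 * x ^ 12 - 175 * x ^ 10 + 61 * x ^ 8 + 95 * x ^ 6 -
            230 * x ^ 4 + 140 * x ^ 2 - 30) /
          (15 * (x ^ 2 - 1) ^ 6 * (x ^ 2 + 1)) := funext hW
    rw [hWfun]
    apply ContinuousOn.sub
    · apply ContinuousOn.log
      · apply ContinuousOn.div (by fun_prop) (by fun_prop)
        rintro x ⟨hx0, hx1⟩
        nlinarith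
      · rintro x ⟨hx0, hx1⟩
        have : (0:ℝ) < 1 - x := by nlinarith
        have : (0:ℝ) < 1 + x := by nlinarith
        positivity
    · apply ContinuousOn.div (by fun_prop) (by fun_prop)
      rintro x ⟨hx0, hx1⟩
      have hx2 : x ^ 2 - 1 ≠ 0 := by nlinarith
      have hx3 : x ^ 2 + 1 ≠ 0 := by positivity
      exact mul_ne_zero (mul_ne_zero (by norm_num) (pow_ne_zero _ hx2)) hx3
  have hmono : StrictMonoOn W (Set.Icc 0 ρ) := by
    apply StrictMonoOn.mono (s := Set.Icc 0 ρ) ?_ le_rfl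
    apply strictMonoOn_of_deriv_pos (convex_Icc 0 ρ) hcont
    intro x hx
    rw [interior_Icc] at hx
    have hx' : x ∈ Set.Ioo (0:ℝ) 1 := ⟨hx.1, lt_trans hx.2 h1⟩
    rw [(hderiv x hx').deriv]
    exact hpos x hx'
  have := hmono (Set.left_mem_Icc.mpr h0.le) (Set.right_mem_Icc.mpr h0.le) h0
  rw [hW0] at this
  exact ne_of_gt this
end
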